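/- arXiv:1002.4348 — 2 statements merged into one kernel-verified Lean document; each statement's English description precedes it below -/
import Mathlib

section
/- The nonzero eigenvalues of ZᵀZ, for Z a real skew-symmetric n×n matrix, occur with even multiplicity; consequently if trace(ZᵀZ) = 1 then all eigenvalues of ZᵀZ lie in [0, 1/2], i.e., 0 ≤ ZᵀZ ≤ (1/2)·I as symmetric matrices. -/
open Matrix

private lemma even_finrank_of_sq_eq_neg_smul {E : Type*} [AddCommGroup E] [Module ℝ E]
    [FiniteDimensional ℝ E]
    (f : E →ₗ[ℝ] E) (μ : ℝ) (hμ : 0 < μ) (h : f ∘ₗ f = (-μ) • LinearMap.id) :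
    Even (Module.finrank ℝ E) := by
  by_contra hodd
  rw [Nat.not_even_iff_odd] at hodd
  have h1 : (LinearMap.det f) ^ 2 = (-μ) ^ Module.finrank ℝ E := by
    rw [sq, ← LinearMap.det_comp, h, LinearMap.det_smul, LinearMap.det_id, mul_one]
  have h2 : (-μ) ^ Module.finrank ℝ E < 0 := hodd.pow_neg (by linarith)
  nlinarith [sq_nonneg (LinearMap.det f)]

private lemma card_filter_eq_finrank_eigenspace {n : ℕ} (A : Matrix (Fin n) (Fin n) ℝ)
    (hherm : A.IsHermitian) (μ : ℝ) :
    (Finset.univ.filter (fun i => hherm.eigenvalues i = μ)).card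
      = Module.finrank ℝ (Module.End.eigenspace A.mulVecLin μ) := by
  classical
  set S := Finset.univ.filter (fun i => hherm.eigenvalues i = μ) with hS
  set v : Fin n → (Fin n → ℝ) := fun i => ⇑(hherm.eigenvectorBasis i) with hv
  have hli : LinearIndependent ℝ v := by
    have := hherm.eigenvectorBasis.toBasis.linearIndependent
    have h2 := this.map' (WithLp.linearEquiv 2 ℝ (Fin n → ℝ)).toLinearMap
      (LinearEquiv.ker _)
    convert h2 using 1
    all_goals first | (funext i; rfl) | rfl
  have hmem : ∀ i ∈ S, v i ∈ Module.End.eigenspace A.mulVecLin μ := by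
    intro i hi
    rw [Module.End.mem_eigenspace_iff]
    have := hherm.mulVec_eigenvectorBasis i
    simp only [hS, Finset.mem_filter] at hi
    simpa [hi.2, Matrix.mulVecLin_apply] using this
  have hspan : Module.End.eigenspace A.mulVecLin μ = Submodule.span ℝ (v '' ↑S) := by
    apply le_antisymm
    · intro x hx
      rw [Module.End.mem_eigenspace_iff] at hx
      set b := hherm.eigenvectorBasis.toBasis with hb
      set c : Fin n → ℝ := fun i => b.repr (WithLp.toLp 2 x) i with hc
      have hxsum : x = ∑ i, c i • v i := by
        have := congrArg WithLp.ofLp (b.sum_repr (WithLp.toLp 2 x)).symm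
        simpa [WithLp.ofLp_sum, hv, hb, hc] using this
      have h1 : A.mulVecLin x = ∑ i, (c i * hherm.eigenvalues i) • v i := by
        conv_lhs => rw [hxsum]
        rw [map_sum]
        refine Finset.sum_congr rfl fun i _ => ?_
        rw [LinearMap.map_smul, Matrix.mulVecLin_apply, hherm.mulVec_eigenvectorBasis i,
          smul_smul]
      have h2 : μ • x = ∑ i, (μ * c i) • v i := by
        conv_lhs => rw [hxsum]
        rw [Finset.smul_sum]
        simp [smul_smul]
      have hsum0 : ∑ i, (c i * hherm.eigenvalues i - μ * c i) • v i = 0 := by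
        simp only [sub_smul, Finset.sum_sub_distrib]
        rw [← h1, ← h2, hx, sub_self]
      have hzero : ∀ i, c i * hherm.eigenvalues i - μ * c i = 0 :=
        Fintype.linearIndependent_iff.mp hli _ hsum0
      have hc0 : ∀ i ∉ S, c i = 0 := by
        intro i hi
        simp only [hS, Finset.mem_filter, Finset.mem_univ, true_and] at hi
        have hne : hherm.eigenvalues i - μ ≠ 0 := sub_ne_zero.mpr hi
        have : c i * (hherm.eigenvalues i - μ) = 0 := by linarith [hzero i]
        rcases mul_eq_zero.mp this with h | h
        · exact h
        · exact absurd h hne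
      have hxS : x = ∑ i ∈ S, c i • v i := by
        rw [hxsum]
        exact (Finset.sum_subset (Finset.subset_univ S)
          (fun i _ hi => by rw [hc0 i hi, zero_smul])).symm
      rw [hxS]
      exact Submodule.sum_mem _ fun i hi => Submodule.smul_mem _ _
        (Submodule.subset_span ⟨i, by simpa using hi, rfl⟩)
    · rw [Submodule.span_le]
      rintro _ ⟨i, hi, rfl⟩
      exact hmem i (by simpa using hi)
  rw [hspan]
  have himg : v '' ↑S = Set.range (v ∘ (Subtype.val : {x // x ∈ S} → Fin n)) := by
    rw [Set.range_comp]
    ext i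
    simp
  rw [himg, finrank_span_eq_card (hli.comp _ Subtype.val_injective)]
  simp [Fintype.card_coe]

/-- For a real skew-symmetric matrix `Z`, the nonzero eigenvalues of `ZᵀZ`
occur with even multiplicity; consequently, if `trace (ZᵀZ) = 1` then
`0 ≤ ZᵀZ ≤ (1/2)•I` in the positive-semidefinite order. -/
theorem skew_sq_eigenvalues_even_multiplicity_and_bound {n : ℕ}
    (Z : Matrix (Fin n) (Fin n) ℝ) (hskew : Zᵀ = -Z)
    (hherm : (Zᵀ * Z).IsHermitian) :
    (∀ μ : ℝ, μ ≠ 0 →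
        Even (Finset.univ.filter (fun i => hherm.eigenvalues i = μ)).card) ∧
      ((Zᵀ * Z).trace = 1 →
        (Zᵀ * Z).PosSemidef ∧ ((1 / 2 : ℝ) • (1 : Matrix (Fin n) (Fin n) ℝ) - Zᵀ * Z).PosSemidef) := by
  classical
  have hpsd : (Zᵀ * Z).PosSemidef := by
    have := Matrix.posSemidef_conjTranspose_mul_self Z
    simpa [Matrix.conjTranspose_eq_transpose_of_trivial] using this
  have hZZ : Z * Z = -(Zᵀ * Z) := by
    rw [hskew, Matrix.neg_mul, neg_neg]
  have hcomm : (Zᵀ * Z) * Z = Z * (Zᵀ * Z) := by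
    have h1 : (Zᵀ * Z) * Z = -(Z * Z * Z) := by rw [hskew]; noncomm_ring
    have h2 : Z * (Zᵀ * Z) = -(Z * Z * Z) := by rw [hskew]; noncomm_ring
    rw [h1, h2]
  have heven : ∀ μ : ℝ, μ ≠ 0 →
      Even (Finset.univ.filter (fun i => hherm.eigenvalues i = μ)).card := by
    intro μ hμ
    rcases (Finset.univ.filter (fun i => hherm.eigenvalues i = μ)).eq_empty_or_nonempty with
      hE | ⟨i, hi⟩
    · rw [hE]; simp
    · simp only [Finset.mem_filter, Finset.mem_univ, true_and] at hi
      have hμpos : 0 < μ := lt_of_le_of_ne (hi ▸ hpsd.eigenvalues_nonneg i) (Ne.symm hμ)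
      rw [card_filter_eq_finrank_eigenspace (Zᵀ * Z) hherm μ]
      set E := Module.End.eigenspace (Zᵀ * Z).mulVecLin μ with hEdef
      have hmaps : ∀ x ∈ E, Z.mulVecLin x ∈ E := by
        intro x hx
        rw [hEdef, Module.End.mem_eigenspace_iff] at hx ⊢
        simp only [Matrix.mulVecLin_apply] at hx ⊢
        rw [Matrix.mulVec_mulVec, hcomm, ← Matrix.mulVec_mulVec, hx,
          Matrix.mulVec_smul]
      have hff : (Z.mulVecLin.restrict hmaps) ∘ₗ (Z.mulVecLin.restrict hmaps)
          = (-μ) • LinearMap.id := by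
        refine LinearMap.ext fun ⟨x, hx⟩ => Subtype.ext ?_
        have hx' : (Zᵀ * Z) *ᵥ x = μ • x := by
          rw [hEdef, Module.End.mem_eigenspace_iff, Matrix.mulVecLin_apply] at hx
          exact hx
        show Z *ᵥ (Z *ᵥ x) = ((-μ) • x : Fin n → ℝ)
        rw [Matrix.mulVec_mulVec, hZZ, Matrix.neg_mulVec, hx', neg_smul]
      exact even_finrank_of_sq_eq_neg_smul _ μ hμpos hff
  refine ⟨heven, ?_⟩
  · intro htr
    refine ⟨hpsd, ?_⟩
    have htrace : (Zᵀ * Z).trace = ∑ i, hherm.eigenvalues i := by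
      nth_rewrite 1 [hherm.spectral_theorem]
      rw [Unitary.conjStarAlgAut_apply]
      rw [Matrix.trace_mul_cycle,
        show (star (hherm.eigenvectorUnitary : Matrix (Fin n) (Fin n) ℝ))
            * (hherm.eigenvectorUnitary : Matrix (Fin n) (Fin n) ℝ) = 1 from
          Matrix.mem_unitaryGroup_iff'.mp hherm.eigenvectorUnitary.2, one_mul,
        Matrix.trace_diagonal]
      simp
    have hev_le : ∀ i, hherm.eigenvalues i ≤ 1 / 2 := by
      by_contra hcon
      push_neg at hcon
      obtain ⟨i, hi⟩ := hcon
      have hμ0 : hherm.eigenvalues i ≠ 0 := by intro h; rw [h] at hi; norm_num at hi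
      set S := Finset.univ.filter (fun j => hherm.eigenvalues j = hherm.eigenvalues i) with hS
      have hiS : i ∈ S := by simp [hS]
      have hcard : 2 ≤ S.card := by
        obtain ⟨k, hk⟩ := heven (hherm.eigenvalues i) hμ0
        have h1 : 0 < S.card := Finset.card_pos.mpr ⟨i, hiS⟩
        rw [← hS] at hk
        omega
      have hsum_ge : ∑ j ∈ S, hherm.eigenvalues j ≤ ∑ j, hherm.eigenvalues j :=
        Finset.sum_le_sum_of_subset_of_nonneg (Finset.subset_univ S)
          (fun j _ _ => hpsd.eigenvalues_nonneg j)
      have hsS : ∑ j ∈ S, hherm.eigenvalues j = S.card * hherm.eigenvalues i := by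
        rw [Finset.sum_congr rfl (fun j hj => by
          simp only [hS, Finset.mem_filter, Finset.mem_univ, true_and] at hj
          exact hj)]
        simp [Finset.sum_const, nsmul_eq_mul]
      have h2μ : (2 : ℝ) * hherm.eigenvalues i ≤ S.card * hherm.eigenvalues i := by
        have : (2 : ℝ) ≤ (S.card : ℝ) := by exact_mod_cast hcard
        nlinarith
      rw [htr] at htrace
      linarith
    have hkey : (1 / 2 : ℝ) • (1 : Matrix (Fin n) (Fin n) ℝ) - Zᵀ * Z
        = (hherm.eigenvectorUnitary : Matrix (Fin n) (Fin n) ℝ)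
          * Matrix.diagonal (fun i => 1 / 2 - hherm.eigenvalues i)
          * (hherm.eigenvectorUnitary : Matrix (Fin n) (Fin n) ℝ)ᴴ := by
      have hUU : (hherm.eigenvectorUnitary : Matrix (Fin n) (Fin n) ℝ)
          * star (hherm.eigenvectorUnitary : Matrix (Fin n) (Fin n) ℝ) = 1 :=
        Matrix.mem_unitaryGroup_iff.mp hherm.eigenvectorUnitary.2
      have hdiag : Matrix.diagonal (fun i => 1 / 2 - hherm.eigenvalues i)
          = (1 / 2 : ℝ) • (1 : Matrix (Fin n) (Fin n) ℝ)
            - Matrix.diagonal (RCLike.ofReal ∘ hherm.eigenvalues) := by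
        ext i j
        by_cases h : i = j <;>
          simp [Matrix.diagonal, Matrix.one_apply, h]
      rw [hdiag, Matrix.mul_sub, Matrix.sub_mul, ← Matrix.star_eq_conjTranspose]
      rw [Matrix.mul_smul, Matrix.mul_one, Matrix.smul_mul, hUU]
      nth_rewrite 1 [hherm.spectral_theorem]
      rw [Unitary.conjStarAlgAut_apply]
    rw [hkey]
    exact (Matrix.posSemidef_diagonal_iff.mpr
      (fun i => by linarith [hev_le i])).mul_mul_conjTranspose_same _
end

section
/- Let Z be a real skew-symmetric n×n matrix with trace(ZᵀZ) = 1 and let θ ∈ ℝ with θ² ≤ 2. Then the matrix J = I − θ·Z − θ²·ZᵀZ satisfies JᵀJ ≤ I. -/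
open Matrix

/-- Key inequality for skew-symmetric matrices: `2‖Zy‖⁴ ≤ tr(ZᵀZ)·‖y‖²·‖Zy‖²`,
obtained from Cauchy–Schwarz in the Frobenius inner product against `y(Zy)ᵀ - (Zy)yᵀ`. -/
lemma skew_key {n : ℕ} (Z : Matrix (Fin n) (Fin n) ℝ) (hskew : Zᵀ = -Z) (y : Fin n → ℝ) :
    2 * ((Z *ᵥ y) ⬝ᵥ (Z *ᵥ y)) ^ 2
      ≤ (Zᵀ * Z).trace * ((y ⬝ᵥ y) * ((Z *ᵥ y) ⬝ᵥ (Z *ᵥ y))) := by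
  set w := Z *ᵥ y with hw
  have hZw : y ⬝ᵥ (Z *ᵥ w) = -(w ⬝ᵥ w) := by
    rw [dotProduct_mulVec, ← mulVec_transpose, hskew, neg_mulVec, neg_dotProduct]
  have hyw : y ⬝ᵥ w = 0 := by
    have h1 : y ⬝ᵥ w = -(w ⬝ᵥ y) := by
      rw [hw, dotProduct_mulVec, ← mulVec_transpose, hskew, neg_mulVec, neg_dotProduct]
    rw [dotProduct_comm w y] at h1
    linarith
  have hCS := Finset.sum_mul_sq_le_sq_mul_sq Finset.univ
      (fun p : Fin n × Fin n => Z p.1 p.2)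
      (fun p : Fin n × Fin n => y p.1 * w p.2 - w p.1 * y p.2)
  have h1 : ∑ p : Fin n × Fin n, Z p.1 p.2 * (y p.1 * w p.2 - w p.1 * y p.2)
      = -(2 * (w ⬝ᵥ w)) := by
    rw [Fintype.sum_prod_type]
    have e1 : ∀ i, ∑ j, Z i j * (y i * w j - w i * y j)
        = y i * (Z *ᵥ w) i - w i * (Z *ᵥ y) i := by
      intro i
      simp only [mulVec, dotProduct, Finset.mul_sum, ← Finset.sum_sub_distrib]
      exact Finset.sum_congr rfl fun j _ => by ring
    simp_rw [e1]
    rw [Finset.sum_sub_distrib]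
    have : (∑ i, y i * (Z *ᵥ w) i) = y ⬝ᵥ (Z *ᵥ w) := rfl
    have h2' : (∑ i, w i * (Z *ᵥ y) i) = w ⬝ᵥ w := rfl
    rw [this, h2', hZw]
    ring
  have h2 : ∑ p : Fin n × Fin n, (Z p.1 p.2) ^ 2 = (Zᵀ * Z).trace := by
    rw [Fintype.sum_prod_type, Matrix.trace]
    simp only [Matrix.diag, Matrix.mul_apply, Matrix.transpose_apply]
    rw [Finset.sum_comm]
    exact Finset.sum_congr rfl fun i _ => Finset.sum_congr rfl fun j _ => by ring
  have h3 : ∑ p : Fin n × Fin n, (y p.1 * w p.2 - w p.1 * y p.2) ^ 2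
      = 2 * ((y ⬝ᵥ y) * (w ⬝ᵥ w)) - (y ⬝ᵥ w) * (2 * (y ⬝ᵥ w)) := by
    rw [Fintype.sum_prod_type]
    have e1 : ∀ i, ∑ j, (y i * w j - w i * y j) ^ 2
        = (y i * y i) * (w ⬝ᵥ w) + (w i * w i) * (y ⬝ᵥ y) - (y i * w i) * (2 * (y ⬝ᵥ w)) := by
      intro i
      simp only [dotProduct, Finset.mul_sum, ← Finset.sum_add_distrib, ← Finset.sum_sub_distrib]
      exact Finset.sum_congr rfl fun j _ => by ring
    simp_rw [e1]
    rw [Finset.sum_sub_distrib, Finset.sum_add_distrib, ← Finset.sum_mul, ← Finset.sum_mul,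
      ← Finset.sum_mul]
    have ey : (∑ i, y i * y i) = y ⬝ᵥ y := rfl
    have ew : (∑ i, w i * w i) = w ⬝ᵥ w := rfl
    have eyw : (∑ i, y i * w i) = y ⬝ᵥ w := rfl
    rw [ey, ew, eyw]
    ring
  rw [h1, h2, h3, hyw] at hCS
  nlinarith [hCS]

theorem truncated_rotation_is_valid_control {n : ℕ}
    (Z : Matrix (Fin n) (Fin n) ℝ) (hskew : Zᵀ = -Z)
    (htr : (Zᵀ * Z).trace = 1) (θ : ℝ) (hθ : θ ^ 2 ≤ 2) :
    (1 - ((1 : Matrix (Fin n) (Fin n) ℝ) - θ • Z - θ ^ 2 • (Zᵀ * Z))ᵀ *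
        ((1 : Matrix (Fin n) (Fin n) ℝ) - θ • Z - θ ^ 2 • (Zᵀ * Z))).PosSemidef := by
  have hid : (1 : Matrix (Fin n) (Fin n) ℝ) -
      ((1 : Matrix (Fin n) (Fin n) ℝ) - θ • Z - θ ^ 2 • (Zᵀ * Z))ᵀ *
        ((1 : Matrix (Fin n) (Fin n) ℝ) - θ • Z - θ ^ 2 • (Zᵀ * Z))
      = θ ^ 2 • (Zᵀ * Z) - θ ^ 4 • ((Zᵀ * Z) * (Zᵀ * Z)) := by
    rw [hskew]
    simp only [transpose_sub, transpose_smul, transpose_one, transpose_mul, transpose_neg,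
      transpose_transpose, hskew]
    simp only [neg_mul, mul_neg, neg_neg, smul_neg, sub_neg_eq_add]
    simp only [sub_mul, mul_sub, add_mul, mul_add, smul_mul_assoc, mul_smul_comm, one_mul, mul_one,
      smul_smul, smul_neg, neg_mul, mul_neg, neg_neg, smul_add, ← mul_assoc]
    module
  rw [hid]
  rw [posSemidef_iff_dotProduct_mulVec]
  constructor
  · show (θ ^ 2 • (Zᵀ * Z) - θ ^ 4 • ((Zᵀ * Z) * (Zᵀ * Z)))ᴴ = _
    rw [conjTranspose_eq_transpose_of_trivial]
    simp only [transpose_sub, transpose_smul, transpose_mul, transpose_transpose]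
  · intro x
    have hx : star x = x := by simp
    rw [hx]
    rw [sub_mulVec, smul_mulVec, smul_mulVec, dotProduct_sub, dotProduct_smul,
      dotProduct_smul]
    set y := Z *ᵥ x with hy
    set w := Z *ᵥ y with hw
    have e1 : x ⬝ᵥ ((Zᵀ * Z) *ᵥ x) = y ⬝ᵥ y := by
      rw [← mulVec_mulVec, dotProduct_mulVec, ← mulVec_transpose, transpose_transpose]
    have e2 : x ⬝ᵥ (((Zᵀ * Z) * (Zᵀ * Z)) *ᵥ x) = w ⬝ᵥ w := by
      rw [← mulVec_mulVec, ← mulVec_mulVec, ← mulVec_mulVec, dotProduct_mulVec,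
        ← mulVec_transpose, transpose_transpose, hskew, neg_mulVec, dotProduct_mulVec,
        ← mulVec_transpose, hskew, neg_mulVec, neg_dotProduct, dotProduct_neg, neg_neg]
    rw [e1, e2]
    have hkey := skew_key Z hskew y
    rw [htr, one_mul, ← hw] at hkey
    have hs : (0:ℝ) ≤ y ⬝ᵥ y := Finset.sum_nonneg fun i _ => mul_self_nonneg _
    have hc : (0:ℝ) ≤ w ⬝ᵥ w := Finset.sum_nonneg fun i _ => mul_self_nonneg _
    have hθ0 : (0:ℝ) ≤ θ ^ 2 := sq_nonneg θ
    rcases eq_or_lt_of_le hc with h0 | h0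
    · simp only [smul_eq_mul, ← h0]
      nlinarith
    · have h2c : 2 * (w ⬝ᵥ w) ≤ y ⬝ᵥ y := by nlinarith [hkey, h0]
      have hfin : θ ^ 4 * (w ⬝ᵥ w) ≤ θ ^ 2 * (y ⬝ᵥ y) := by
        nlinarith [mul_nonneg (by linarith : (0:ℝ) ≤ 2 - θ ^ 2) (mul_nonneg hθ0 hc),
          mul_nonneg hθ0 (by linarith : (0:ℝ) ≤ y ⬝ᵥ y - 2 * (w ⬝ᵥ w))]
      simp only [smul_eq_mul]
      linarith
end
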